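/- Let M be a real symmetric positive definite matrix of size (n+m)×(n+m) written in block form M = [[A, B], [Bᵀ, D]] with A of size n×n. For c₁ ∈ ℝⁿ, c₂ ∈ ℝᵐ and c = (c₁, c₂) ∈ ℝ^{n+m}, one has c₁ᵀ A⁻¹ c₁ = cᵀ M⁻¹ c if and only if c₂ = Bᵀ A⁻¹ c₁. In particular, if c₂ ≠ Bᵀ A⁻¹ c₁ then c₁ᵀ A⁻¹ c₁ < cᵀ M⁻¹ c strictly. -/

import Mathlib

open Matrix

/-- **Equality case of the block quadratic-form inequality (strict variance reduction).**
For a real symmetric positive definite block matrix `M = [[A, B], [Bᵀ, D]]` and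
`c = (c₁, c₂)`, one has `c₁ᵀ A⁻¹ c₁ = cᵀ M⁻¹ c` iff `c₂ = Bᵀ A⁻¹ c₁`; in particular
if `c₂ ≠ Bᵀ A⁻¹ c₁` then the inequality is strict. -/
theorem block_inverse_quadratic_form_eq_iff
    (n m : ℕ)
    (A : Matrix (Fin n) (Fin n) ℝ) (B : Matrix (Fin n) (Fin m) ℝ)
    (D : Matrix (Fin m) (Fin m) ℝ)
    (M : Matrix (Fin n ⊕ Fin m) (Fin n ⊕ Fin m) ℝ)
    (hM : M = fromBlocks A B Bᵀ D)
    (hpd : M.PosDef) :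
    ∀ (c₁ : Fin n → ℝ) (c₂ : Fin m → ℝ),
      (c₁ ⬝ᵥ A⁻¹ *ᵥ c₁ = (Sum.elim c₁ c₂) ⬝ᵥ M⁻¹ *ᵥ (Sum.elim c₁ c₂) ↔
        c₂ = Bᵀ *ᵥ (A⁻¹ *ᵥ c₁)) ∧
      (c₂ ≠ Bᵀ *ᵥ (A⁻¹ *ᵥ c₁) →
        c₁ ⬝ᵥ A⁻¹ *ᵥ c₁ < (Sum.elim c₁ c₂) ⬝ᵥ M⁻¹ *ᵥ (Sum.elim c₁ c₂)) := by
  have hMsymm : Mᵀ = M := by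
    have := hpd.1
    simpa [Matrix.IsHermitian, conjTranspose_eq_transpose_of_trivial] using this
  have hApd : A.PosDef := by
    refine PosDef.of_dotProduct_mulVec_pos ?_ ?_
    · show Aᴴ = A
      have h2 : (fromBlocks A B Bᵀ D)ᵀ = fromBlocks A B Bᵀ D := by rwa [hM] at hMsymm
      rw [fromBlocks_transpose] at h2
      ext i j
      have := congrFun (congrFun h2 (Sum.inl i)) (Sum.inl j)
      simpa using this
    · intro x hx
      have hx' : Sum.elim x (0 : Fin m → ℝ) ≠ 0 := by
        intro h
        exact hx (funext fun i => congrFun h (Sum.inl i))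
      have := hpd.dotProduct_mulVec_pos hx'
      rw [hM] at this
      simpa [fromBlocks_mulVec, sumElim_dotProduct_sumElim, mulVec_zero] using this
  have hMdet : IsUnit M.det := hpd.det_pos.ne'.isUnit
  have hAdet : IsUnit A.det := hApd.det_pos.ne'.isUnit
  intro c₁ c₂
  set c : Fin n ⊕ Fin m → ℝ := Sum.elim c₁ c₂ with hc
  set v : Fin n ⊕ Fin m → ℝ := Sum.elim (A⁻¹ *ᵥ c₁) 0 with hv
  set u : Fin n ⊕ Fin m → ℝ := M⁻¹ *ᵥ c with hu
  have hMu : M *ᵥ u = c := by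
    rw [hu, mulVec_mulVec, mul_nonsing_inv M hMdet, one_mulVec]
  have hAv : A *ᵥ (A⁻¹ *ᵥ c₁) = c₁ := by
    rw [mulVec_mulVec, mul_nonsing_inv A hAdet, one_mulVec]
  have hMv : M *ᵥ v = Sum.elim c₁ (Bᵀ *ᵥ (A⁻¹ *ᵥ c₁)) := by
    rw [hM, hv, fromBlocks_mulVec]
    simp [hAv]
  have key : (v - u) ⬝ᵥ M *ᵥ (v - u) = c ⬝ᵥ u - c₁ ⬝ᵥ A⁻¹ *ᵥ c₁ := by
    have huMv : u ⬝ᵥ M *ᵥ v = c ⬝ᵥ v := by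
      rw [dotProduct_mulVec, ← mulVec_transpose, hMsymm, hMu]
    have hvc : c ⬝ᵥ v = c₁ ⬝ᵥ A⁻¹ *ᵥ c₁ := by
      rw [hc, hv, sumElim_dotProduct_sumElim, dotProduct_zero, add_zero]
    have hvMv : v ⬝ᵥ M *ᵥ v = (A⁻¹ *ᵥ c₁) ⬝ᵥ c₁ := by
      rw [hMv, hv, sumElim_dotProduct_sumElim, zero_dotProduct, add_zero]
    have hvMu : v ⬝ᵥ M *ᵥ u = (A⁻¹ *ᵥ c₁) ⬝ᵥ c₁ := by
      rw [hMu, hv, hc, sumElim_dotProduct_sumElim, zero_dotProduct, add_zero]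
    have huMu : u ⬝ᵥ M *ᵥ u = c ⬝ᵥ u := by
      rw [hMu, hu, dotProduct_comm]
    rw [mulVec_sub, dotProduct_sub, sub_dotProduct, sub_dotProduct,
      hvMv, hvMu, huMv, huMu, hvc, dotProduct_comm (A⁻¹ *ᵥ c₁) c₁]
    ring
  have hw_iff : v - u = 0 ↔ c₂ = Bᵀ *ᵥ (A⁻¹ *ᵥ c₁) := by
    rw [sub_eq_zero]
    constructor
    · intro h
      have : M *ᵥ v = c := by rw [h, hMu]
      rw [hMv, hc] at this
      exact (funext fun j => congrFun this (Sum.inr j)).symm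
    · intro h
      have hMvc : M *ᵥ v = c := by
        rw [hMv, hc, h]
      rw [hu, ← hMvc, mulVec_mulVec, nonsing_inv_mul M hMdet, one_mulVec]
  have hpos : ∀ w : Fin n ⊕ Fin m → ℝ, w ≠ 0 → 0 < w ⬝ᵥ M *ᵥ w := by
    intro w hw
    simpa using hpd.dotProduct_mulVec_pos hw
  constructor
  · constructor
    · intro heq
      by_contra hne
      have hwne : v - u ≠ 0 := fun h => hne (hw_iff.1 h)
      have := hpos _ hwne
      rw [key] at this
      rw [heq] at this
      simp at this
    · intro h
      have h0 : v - u = 0 := hw_iff.2 h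
      have := key
      rw [h0, zero_dotProduct] at this
      linarith
  · intro hne
    have hwne : v - u ≠ 0 := fun h => hne (hw_iff.1 h)
    have := hpos _ hwne
    rw [key] at this
    linarith
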